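/- Let Γ be a simple graph that is strongly regular with parameters (275,112,30,56), let p1 and p2 be distinct non-adjacent vertices of Γ, and let C be a 5-clique of Γ containing p1. Then C contains exactly 2 common neighbours of p1 and p2 (in particular, C intersects the set of 56 common neighbours of p1 and p2 in exactly 2 vertices). -/

import Mathlib

open Finset SimpleGraph

/-- In an SRG(275,112,30,56), every vertex outside a 5-clique has exactly 2
neighbours in the clique (variance-zero double counting). -/
lemma srg_275_nexus {V : Type*} [Fintype V] (Γ : SimpleGraph V) [DecidableRel Γ.Adj]
    (hΓ : Γ.IsSRGWith 275 112 30 56)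
    (C : Finset V) (hC : Γ.IsNClique 5 C) {u : V} (hu : u ∉ C) :
    (C.filter (fun x => Γ.Adj u x)).card = 2 := by
  classical
  have hclique := hC.isClique
  have hcard : C.card = 5 := hC.card_eq
  set A : Finset V := Finset.univ \ C with hA
  have hAcard : A.card = 270 := by
    rw [hA, card_sdiff_of_subset (subset_univ C), hcard, Finset.card_univ, hΓ.card]
  -- neighbours inside the clique: for x ∈ C, N(x) ∩ C = C.erase x
  have hNC : ∀ x ∈ C, Γ.neighborFinset x ∩ C = C.erase x := by
    intro x hx
    ext y
    simp only [mem_inter, mem_neighborFinset, mem_erase]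
    constructor
    · rintro ⟨hadj, hyC⟩
      exact ⟨fun h => Γ.loopless.irrefl x (h ▸ hadj), hyC⟩
    · rintro ⟨hne, hyC⟩
      exact ⟨(hclique hx hyC (Ne.symm hne)), hyC⟩
  -- deg outside the clique
  have hdegout : ∀ x ∈ C, (Γ.neighborFinset x \ C).card = 108 := by
    intro x hx
    have h1 := Finset.card_sdiff_add_card_inter (Γ.neighborFinset x) C
    rw [hNC x hx, Finset.card_erase_of_mem hx, hcard] at h1
    have h2 : (Γ.neighborFinset x).card = 112 := hΓ.regular x
    omega
  -- key counting sets
  have hfilt1 : ∀ x ∈ C, A.filter (fun v => Γ.Adj v x) = Γ.neighborFinset x \ C := by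
    intro x hx
    ext v
    simp only [hA, mem_filter, mem_sdiff, mem_univ, true_and, mem_neighborFinset]
    constructor
    · rintro ⟨hvC, hadj⟩; exact ⟨hadj.symm, hvC⟩
    · rintro ⟨hadj, hvC⟩; exact ⟨hvC, hadj.symm⟩
  -- common neighbours count for adjacent pairs
  have hcommon : ∀ x ∈ C, ∀ y ∈ C, x ≠ y →
      (Γ.neighborFinset x ∩ Γ.neighborFinset y).card = 30 := by
    intro x hx y hy hxy
    have hadj : Γ.Adj x y := hclique hx hy hxy
    have h := hΓ.of_adj x y hadj
    rw [← Set.toFinset_card] at h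
    convert h using 2
    ext v
    simp [SimpleGraph.mem_commonNeighbors]
  -- common neighbours of x ≠ y inside C : exactly the other 3 clique vertices
  have hcommonC : ∀ x ∈ C, ∀ y ∈ C, x ≠ y →
      ((Γ.neighborFinset x ∩ Γ.neighborFinset y) ∩ C).card = 3 := by
    intro x hx y hy hxy
    have : (Γ.neighborFinset x ∩ Γ.neighborFinset y) ∩ C = (C.erase x).erase y := by
      ext z
      simp only [mem_inter, mem_neighborFinset, mem_erase]
      constructor
      · rintro ⟨⟨h1, h2⟩, hz⟩
        exact ⟨fun h => Γ.loopless.irrefl y (h ▸ h2), fun h => Γ.loopless.irrefl x (h ▸ h1), hz⟩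
      · rintro ⟨hzy, hzx, hz⟩
        exact ⟨⟨hclique hx hz (Ne.symm hzx), hclique hy hz (Ne.symm hzy)⟩, hz⟩
    rw [this, Finset.card_erase_of_mem, Finset.card_erase_of_mem hx, hcard]
    exact Finset.mem_erase.2 ⟨Ne.symm hxy, hy⟩
  have hfilt2 : ∀ x ∈ C, ∀ y ∈ C, x ≠ y →
      (A.filter (fun v => Γ.Adj v x ∧ Γ.Adj v y)).card = 27 := by
    intro x hx y hy hxy
    have heq : A.filter (fun v => Γ.Adj v x ∧ Γ.Adj v y)
        = (Γ.neighborFinset x ∩ Γ.neighborFinset y) \ C := by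
      ext v
      simp only [hA, mem_filter, mem_sdiff, mem_univ, true_and, mem_inter,
        mem_neighborFinset]
      constructor
      · rintro ⟨hvC, h1, h2⟩; exact ⟨⟨h1.symm, h2.symm⟩, hvC⟩
      · rintro ⟨⟨h1, h2⟩, hvC⟩; exact ⟨hvC, h1.symm, h2.symm⟩
    have h1 := Finset.card_sdiff_add_card_inter
      (Γ.neighborFinset x ∩ Γ.neighborFinset y) C
    rw [hcommon x hx y hy hxy, hcommonC x hx y hy hxy] at h1
    rw [heq]; omega
  -- f v = number of neighbours of v in C
  set f : V → ℕ := fun v => (C.filter (fun x => Γ.Adj v x)).card with hf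
  have hcardfilter : ∀ v, f v = ∑ x ∈ C, if Γ.Adj v x then 1 else 0 :=
    fun v => Finset.card_filter _ _
  -- first moment
  have hS1 : ∑ v ∈ A, f v = 540 := by
    have : ∑ v ∈ A, f v = ∑ x ∈ C, (A.filter (fun v => Γ.Adj v x)).card := by
      simp only [hcardfilter]
      rw [Finset.sum_comm]
      refine Finset.sum_congr rfl fun x _ => ?_
      exact (Finset.card_filter _ _).symm
    rw [this]
    rw [Finset.sum_congr rfl (fun x hx => by rw [hfilt1 x hx, hdegout x hx])]
    rw [Finset.sum_const, hcard]
    norm_num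
  -- second moment
  have hS2 : ∑ v ∈ A, f v * f v = 1080 := by
    have step1 : ∀ v, f v * f v
        = ∑ x ∈ C, ∑ y ∈ C, if Γ.Adj v x ∧ Γ.Adj v y then 1 else 0 := by
      intro v
      rw [hcardfilter, Finset.sum_mul_sum]
      refine Finset.sum_congr rfl fun x _ => Finset.sum_congr rfl fun y _ => ?_
      by_cases h1 : Γ.Adj v x <;> by_cases h2 : Γ.Adj v y <;> simp [h1, h2]
    have step2 : ∑ v ∈ A, f v * f v
        = ∑ x ∈ C, ∑ y ∈ C, (A.filter (fun v => Γ.Adj v x ∧ Γ.Adj v y)).card := by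
      simp only [step1]
      rw [Finset.sum_comm]
      refine Finset.sum_congr rfl fun x _ => ?_
      rw [Finset.sum_comm]
      refine Finset.sum_congr rfl fun y _ => ?_
      exact (Finset.card_filter _ _).symm
    rw [step2]
    have inner : ∀ x ∈ C,
        ∑ y ∈ C, (A.filter (fun v => Γ.Adj v x ∧ Γ.Adj v y)).card = 216 := by
      intro x hx
      rw [← Finset.add_sum_erase C _ hx]
      have hdiag : (A.filter (fun v => Γ.Adj v x ∧ Γ.Adj v x)).card = 108 := by
        have : A.filter (fun v => Γ.Adj v x ∧ Γ.Adj v x)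
            = A.filter (fun v => Γ.Adj v x) := by
          refine Finset.filter_congr fun v _ => ?_; tauto
        rw [this, hfilt1 x hx, hdegout x hx]
      rw [hdiag]
      have hoff : ∑ y ∈ C.erase x,
          (A.filter (fun v => Γ.Adj v x ∧ Γ.Adj v y)).card = 108 := by
        have : ∀ y ∈ C.erase x,
            (A.filter (fun v => Γ.Adj v x ∧ Γ.Adj v y)).card = 27 := by
          intro y hy
          obtain ⟨hyx, hyC⟩ := Finset.mem_erase.1 hy
          exact hfilt2 x hx y hyC (Ne.symm hyx)
        rw [Finset.sum_congr rfl this, Finset.sum_const,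
          Finset.card_erase_of_mem hx, hcard]
        norm_num
      rw [hoff]
    rw [Finset.sum_congr rfl inner, Finset.sum_const, hcard]
    norm_num
  -- variance is zero
  have hvar : ∑ v ∈ A, ((f v : ℤ) - 2) ^ 2 = 0 := by
    have expand : ∀ v ∈ A, ((f v : ℤ) - 2) ^ 2
        = (f v : ℤ) * (f v : ℤ) - 4 * (f v : ℤ) + 4 := fun v _ => by ring
    rw [Finset.sum_congr rfl expand, Finset.sum_add_distrib,
      Finset.sum_sub_distrib, ← Finset.mul_sum, Finset.sum_const, hAcard]
    have h1 : ∑ v ∈ A, (f v : ℤ) * (f v : ℤ) = 1080 := by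
      exact_mod_cast congrArg (Nat.cast : ℕ → ℤ) hS2
    have h2 : ∑ v ∈ A, (f v : ℤ) = 540 := by
      exact_mod_cast congrArg (Nat.cast : ℕ → ℤ) hS1
    rw [h1, h2]; norm_num
  have huA : u ∈ A := by simp [hA, hu]
  have hzero : ((f u : ℤ) - 2) ^ 2 = 0 :=
    (Finset.sum_eq_zero_iff_of_nonneg fun v _ => sq_nonneg _).1 hvar u huA
  have : (f u : ℤ) = 2 := by
    have := pow_eq_zero_iff (n := 2) (by norm_num) |>.1 hzero
    linarith
  exact_mod_cast this

/-- Let Γ be a strongly regular graph with parameters (275,112,30,56), let p₁ and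
p₂ be distinct non-adjacent vertices, and let C be a 5-clique containing p₁.
Then C contains exactly 2 common neighbours of p₁ and p₂. -/
theorem srg_275_five_clique_through_p1_meets_common_neighbours_in_two
    {V : Type*} [Fintype V] (Γ : SimpleGraph V) [DecidableRel Γ.Adj]
    (hΓ : Γ.IsSRGWith 275 112 30 56)
    (p₁ p₂ : V) (hne : p₁ ≠ p₂) (hnadj : ¬ Γ.Adj p₁ p₂)
    (C : Finset V) (hC : Γ.IsNClique 5 C) (hp₁ : p₁ ∈ C) :
    {u : V | u ∈ C ∧ Γ.Adj p₁ u ∧ Γ.Adj p₂ u}.ncard = 2 := by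
  classical
  have hp₂C : p₂ ∉ C := fun h => hnadj (hC.isClique hp₁ h hne)
  have hset : {u : V | u ∈ C ∧ Γ.Adj p₁ u ∧ Γ.Adj p₂ u}
      = ↑(C.filter (fun x => Γ.Adj p₂ x)) := by
    ext u
    simp only [Set.mem_setOf_eq, Finset.coe_filter, Set.mem_setOf_eq]
    constructor
    · rintro ⟨hu, _, h2⟩; exact ⟨hu, h2⟩
    · rintro ⟨hu, h2⟩
      have hup₁ : u ≠ p₁ := fun h => hnadj (h ▸ h2).symm
      exact ⟨hu, hC.isClique hp₁ hu (Ne.symm hup₁), h2⟩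
  rw [hset, Set.ncard_coe_finset]
  exact srg_275_nexus Γ hΓ C hC hp₂C
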